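/- Every well-founded strict partial order on a countable set can be extended to a well-founded strict total order, i.e., a strict total order in which every element has only finitely many predecessors. -/

import Mathlib

theorem twoPowSum_inj {S T : Finset ℕ} (h : ∑ i ∈ S, 2 ^ i = ∑ i ∈ T, 2 ^ i) :
    S = T := by
  have := congrArg (fun n => n.bitIndices.toFinset) h
  simpa using this

/-- Every strict partial order on a countable set in which each element has only
finitely many predecessors can be extended to a strict total order in which each
element still has only finitely many predecessors. -/
theorem stmt4 {A : Type} [Countable A] (r : A → A → Prop)
    (hirr : Irreflexive r) (htrans : Transitive r)
    (hfin : ∀ a : A, {b | r b a}.Finite) :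
    ∃ s : A → A → Prop,
      (∀ a b : A, r a b → s a b) ∧
      IsStrictTotalOrder A s ∧
      ∀ a : A, {b | s b a}.Finite := by
  obtain ⟨g, hg⟩ := Countable.exists_injective_nat A
  -- downset as a finset
  have hDfin : ∀ a : A, (insert a {b | r b a}).Finite := fun a =>
    ((hfin a).insert a)
  set D : A → Finset A := fun a => (hDfin a).toFinset with hD
  have hmemD : ∀ a b : A, b ∈ D a ↔ (b = a ∨ r b a) := by
    intro a b; simp [hD, Set.Finite.mem_toFinset]
  set f : A → ℕ := fun a => ∑ b ∈ D a, 2 ^ g b with hf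
  -- f is injective
  have hDinj : ∀ a b : A, D a = D b → a = b := by
    intro a b hab
    have ha : a ∈ D b := hab ▸ ((hmemD a a).2 (Or.inl rfl))
    have hb : b ∈ D a := hab ▸ ((hmemD b b).2 (Or.inl rfl))
    rcases (hmemD b a).1 ha with h1 | h1
    · exact h1
    rcases (hmemD a b).1 hb with h2 | h2
    · exact h2.symm
    exact absurd (htrans h1 h2) (hirr a)
  have hfinj : Function.Injective f := by
    intro a b hab
    apply hDinj
    have : (D a).image g = (D b).image g := by
      apply twoPowSum_inj
      rw [Finset.sum_image (fun x _ y _ h => hg h),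
        Finset.sum_image (fun x _ y _ h => hg h)]
      exact hab
    ext x
    constructor <;> intro hx
    · have : g x ∈ (D b).image g := this ▸ Finset.mem_image_of_mem g hx
      obtain ⟨y, hy, hgy⟩ := Finset.mem_image.1 this
      exact hg hgy ▸ hy
    · have : g x ∈ (D a).image g := this ▸ Finset.mem_image_of_mem g hx
      obtain ⟨y, hy, hgy⟩ := Finset.mem_image.1 this
      exact hg hgy ▸ hy
  -- f is strictly monotone w.r.t. r
  have hmono : ∀ a b : A, r a b → f a < f b := by
    intro a b hab
    apply Finset.sum_lt_sum_of_subset (i := b)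
    · intro c hc
      rcases (hmemD a c).1 hc with h | h
      · exact (hmemD b c).2 (Or.inr (h ▸ hab))
      · exact (hmemD b c).2 (Or.inr (htrans h hab))
    · exact (hmemD b b).2 (Or.inl rfl)
    · intro hb
      rcases (hmemD a b).1 hb with h | h
      · exact hirr a (h ▸ hab)
      · exact hirr a (htrans hab h)
    · positivity
    · intro j _ _; positivity
  refine ⟨fun a b => f a < f b, fun a b h => hmono a b h,
    { trichotomous := ?_, irrefl := fun a => lt_irrefl _,
      trans := fun a b c => lt_trans }, ?_⟩
  · intro a b
    rcases lt_trichotomy (f a) (f b) with h | h | h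
    · exact fun h1 _ => absurd h h1
    · exact fun _ _ => hfinj h
    · exact fun _ h2 => absurd h h2
  · intro a
    have : {b | f b < f a} ⊆ f ⁻¹' (Set.Iio (f a)) := fun b hb => hb
    exact Set.Finite.subset ((Set.finite_Iio (f a)).preimage hfinj.injOn) this
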